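/- Let n ≥ a+b, let j ≥ 1 be an integer with a < b, and let F ⊆ C([n],a) and G ⊆ C([n],b) be cross-intersecting families with |F| ≥ C(n−j, a−j). Then |F| + |G| ≤ C(n,b) + C(n−j, a−j) − C(n−j, b). -/

import Mathlib

attribute [-instance] instDecidableEqFin

open Finset Nat

namespace FTAux

/-- step of unimodality -/
lemma choose_le_succ_self {v k : ℕ} (h : 2 * k + 1 ≤ v) : v.choose k ≤ v.choose (k + 1) := by
  have h1 : v.choose k * (k + 1) ≤ v.choose k * (v - k) := by
    apply Nat.mul_le_mul_left; omega
  rw [← Nat.choose_succ_right_eq] at h1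
  exact Nat.le_of_mul_le_mul_right h1 (by omega)

lemma N1half {v i j : ℕ} (hij : i ≤ j) (hj : j ≤ v / 2) : v.choose i ≤ v.choose j := by
  induction j, hij using Nat.le_induction with
  | base => exact le_refl _
  | succ j hij ih =>
      exact (ih (by omega)).trans (choose_le_succ_self (by omega))

/-- unimodality: `C(v,i) ≤ C(v,j)` whenever `i ≤ j` and `i + j ≤ v`. -/
lemma N1 {v i j : ℕ} (hij : i ≤ j) (hsum : i + j ≤ v) : v.choose i ≤ v.choose j := by
  rcases le_or_gt j (v / 2) with h | h
  · exact N1half hij h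
  · have hjv : j ≤ v := by omega
    rw [← Nat.choose_symm hjv]
    exact N1half (by omega) (by omega)

/-- `C(M,l) ≤ C(M,c)` when `c ≤ l` and `M ≤ l + c`. -/
lemma C1 {M c l : ℕ} (hcl : c ≤ l) (hM : M ≤ l + c) : M.choose l ≤ M.choose c := by
  rcases le_or_gt l M with h | h
  · rw [← Nat.choose_symm h]
    exact N1 (by omega) (by omega)
  · rw [Nat.choose_eq_zero_of_lt h]; exact Nat.zero_le _

/-- `C(N,c) ≤ C(N,l)` when `c ≤ l` and `l + c ≤ N`. -/
lemma C2 {N c l : ℕ} (hcl : c ≤ l) (hN : l + c ≤ N) : N.choose c ≤ N.choose l :=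
  N1 hcl (by omega)

/-- `x ↦ C(x,l) - C(x,c)` is nondecreasing past `l+c-1`. -/
lemma N2inc {c l x y : ℕ} (hcl : c ≤ l) (hx : l + c ≤ x + 1) (hxy : x ≤ y) :
    x.choose l + y.choose c ≤ x.choose c + y.choose l := by
  induction y, hxy using Nat.le_induction with
  | base => omega
  | succ y hxy ih =>
      rcases Nat.eq_zero_or_pos c with rfl | hc
      · simp only [Nat.choose_zero_right]
        have : x.choose l ≤ (y+1).choose l := Nat.choose_le_choose _ (by omega)
        omega
      · obtain ⟨c, rfl⟩ : ∃ c', c = c' + 1 := ⟨c - 1, by omega⟩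
        obtain ⟨l, rfl⟩ : ∃ l', l = l' + 1 := ⟨l - 1, by omega⟩
        rw [Nat.choose_succ_succ' y c, Nat.choose_succ_succ' y l]
        have hkey : y.choose c ≤ y.choose l := N1 (by omega) (by omega)
        omega

/-- `x ↦ C(x,r) - C(x,b)` is nonincreasing before `r+b-1`. -/
lemma N2dec {b r x y : ℕ} (hbr : b ≤ r) (hy : y + 1 ≤ r + b) (hxy : x ≤ y) :
    y.choose r + x.choose b ≤ x.choose r + y.choose b := by
  induction y, hxy using Nat.le_induction with
  | base => omega
  | succ y hxy ih =>
      rcases Nat.eq_zero_or_pos b with rfl | hb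
      · simp only [Nat.choose_zero_right]
        have : (y+1).choose r = 0 := Nat.choose_eq_zero_of_lt (by omega)
        have := ih (by omega)
        omega
      · obtain ⟨b, rfl⟩ : ∃ b', b = b' + 1 := ⟨b - 1, by omega⟩
        obtain ⟨r, rfl⟩ : ∃ r', r = r' + 1 := ⟨r - 1, by omega⟩
        rw [Nat.choose_succ_succ' y b, Nat.choose_succ_succ' y r]
        have hkey : y.choose r ≤ y.choose b := C1 (by omega) (by omega)
        have := ih (by omega)
        omega

section Colex

open Finset.Colex
open scoped FinsetFamily

variable {n : ℕ}

/-- erase the minimum element -/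
def emin (u : Finset (Fin n)) : Finset (Fin n) :=
  if h : u.Nonempty then u.erase (u.min' h) else ∅

/-- erase the `k` smallest elements -/
def topk (k : ℕ) (u : Finset (Fin n)) : Finset (Fin n) := emin^[k] u

lemma card_emin (u : Finset (Fin n)) (h : u.Nonempty) : #(emin u) = #u - 1 := by
  rw [emin, dif_pos h, card_erase_of_mem (min'_mem _ _)]

lemma emin_subset (u : Finset (Fin n)) : emin u ⊆ u := by
  rw [emin]; split
  · exact erase_subset _ _
  · exact empty_subset _

lemma topk_zero (u : Finset (Fin n)) : topk 0 u = u := rfl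

lemma topk_succ (k : ℕ) (u : Finset (Fin n)) : topk (k+1) u = topk k (emin u) :=
  Function.iterate_succ_apply _ _ _

lemma card_topk (k : ℕ) (u : Finset (Fin n)) (h : k ≤ #u) : #(topk k u) = #u - k := by
  induction k generalizing u with
  | zero => simp [topk_zero]
  | succ k ih =>
      rw [topk_succ]
      have hne : u.Nonempty := card_pos.1 (by omega)
      rw [ih _ (by rw [card_emin _ hne]; omega), card_emin _ hne]
      omega

lemma topk_subset (k : ℕ) (u : Finset (Fin n)) : topk k u ⊆ u := by
  induction k generalizing u with
  | zero => exact Subset.rfl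
  | succ k ih => exact (topk_succ k u ▸ ih (emin u)).trans (emin_subset u)

lemma min'_erase_max (u : Finset (Fin n)) (h2 : 2 ≤ #u) (hu : u.Nonempty)
    (hne : (u.erase (u.max' hu)).Nonempty) :
    (u.erase (u.max' hu)).min' hne = u.min' hu := by
  have hmm : u.min' hu < u.max' hu := min'_lt_max'_of_card _ (by omega)
  apply le_antisymm
  · exact min'_le _ _ (mem_erase.2 ⟨hmm.ne, min'_mem _ _⟩)
  · exact min'_le _ _ (mem_of_mem_erase (min'_mem _ _))

lemma emin_erase_max (u : Finset (Fin n)) (hu : u.Nonempty) (h2 : 2 ≤ #u) :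
    emin (u.erase (u.max' hu)) = (emin u).erase (u.max' hu) := by
  have hne : (u.erase (u.max' hu)).Nonempty := by
    rw [← card_pos, card_erase_of_mem (max'_mem _ _)]; omega
  rw [emin, dif_pos hne, emin, dif_pos hu, min'_erase_max u h2 hu hne, erase_right_comm]

lemma max'_mem_emin (u : Finset (Fin n)) (hu : u.Nonempty) (h2 : 2 ≤ #u) :
    u.max' hu ∈ emin u := by
  rw [emin, dif_pos hu]
  exact mem_erase.2 ⟨(min'_lt_max'_of_card _ (by omega)).ne', max'_mem _ _⟩

lemma max'_mem_topk (k : ℕ) (u : Finset (Fin n)) (hu : u.Nonempty) (hk : k < #u) :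
    u.max' hu ∈ topk k u := by
  induction k generalizing u with
  | zero => exact max'_mem _ _
  | succ k ih =>
      rw [topk_succ]
      have h2 : 2 ≤ #u := by omega
      have hne : (emin u).Nonempty := by rw [← card_pos, card_emin _ hu]; omega
      have hmax : (emin u).max' hne = u.max' hu := by
        apply le_antisymm
        · exact max'_le _ _ _ fun x hx => le_max' _ _ (emin_subset u hx)
        · exact le_max' _ _ (max'_mem_emin u hu h2)
      have := ih (emin u) hne (by rw [card_emin _ hu]; omega)
      rwa [hmax] at this

lemma max'_topk (k : ℕ) (u : Finset (Fin n)) (hu : u.Nonempty) (hk : k < #u)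
    (hne : (topk k u).Nonempty) : (topk k u).max' hne = u.max' hu := by
  apply le_antisymm
  · exact max'_le _ _ _ fun x hx => le_max' _ _ (topk_subset k u hx)
  · exact le_max' _ _ (max'_mem_topk k u hu hk)

lemma topk_erase_max (k : ℕ) (u : Finset (Fin n)) (hu : u.Nonempty) (hk : k + 1 ≤ #u) :
    topk k (u.erase (u.max' hu)) = (topk k u).erase (u.max' hu) := by
  induction k generalizing u with
  | zero => simp [topk_zero]
  | succ k ih =>
      have h2 : 2 ≤ #u := by omega
      have hne : (emin u).Nonempty := by rw [← card_pos, card_emin _ hu]; omega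
      have hmax : (emin u).max' hne = u.max' hu := by
        apply le_antisymm
        · exact max'_le _ _ _ fun x hx => le_max' _ _ (emin_subset u hx)
        · exact le_max' _ _ (max'_mem_emin u hu h2)
      rw [topk_succ, emin_erase_max u hu h2, topk_succ]
      have := ih (emin u) hne (by rw [card_emin _ hu]; omega)
      rwa [hmax] at this

lemma initSeg_empty_eq : initSeg (∅ : Finset (Fin n)) = {∅} := by
  ext t
  simp only [mem_initSeg, mem_singleton, card_empty]
  constructor
  · rintro ⟨h, -⟩
    exact (card_eq_zero.1 h.symm)
  · rintro rfl
    exact ⟨rfl, le_rfl⟩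

lemma card_initSeg_le (u : Finset (Fin n)) (N : ℕ) (hN : ∀ x ∈ u, (x : ℕ) < N) :
    #(initSeg u) ≤ N.choose #u := by
  classical
  have : ∀ X ∈ initSeg u, X.image (Fin.val) ∈ (Finset.range N).powersetCard #u := by
    intro X hX
    rw [mem_initSeg] at hX
    rw [mem_powersetCard]
    constructor
    · intro x hx
      simp only [mem_image] at hx
      obtain ⟨y, hy, rfl⟩ := hx
      rcases u.eq_empty_or_nonempty with rfl | hu
      · rw [card_eq_zero.1 hX.1.symm] at hy; exact absurd hy (notMem_empty _)
      · have hyu : y ≤ u.max' hu := Colex.forall_le_mono hX.2 (fun b hb => le_max' _ _ hb) _ hy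
        have := hN _ (max'_mem _ hu)
        rw [mem_range]
        have : (y:ℕ) ≤ ((u.max' hu : Fin n) : ℕ) := hyu
        omega
    · rw [card_image_of_injective _ Fin.val_injective, ← hX.1]
  calc #(initSeg u) ≤ #((Finset.range N).powersetCard #u) := by
        apply card_le_card_of_injOn _ this
        intro X hX Y hY hXY
        exact image_injective (f := Fin.val) Fin.val_injective (by exact_mod_cast hXY)
    _ = N.choose #u := by rw [card_powersetCard, card_range]

/-- The peeling identity for initial segment cardinalities. -/
lemma card_initSeg_peel (u : Finset (Fin n)) (hu : u.Nonempty) :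
    #(initSeg u) =
      (((u.max' hu : Fin n) : ℕ)).choose #u + #(initSeg (u.erase (u.max' hu))) := by
  classical
  set M := u.max' hu with hM
  have hsplit : initSeg u =
      (Finset.Iio M).powersetCard #u ∪ (initSeg (u.erase M)).image (insert M) := by
    ext X
    simp only [mem_initSeg, mem_union, mem_powersetCard, mem_image]
    constructor
    · rintro ⟨hcard, hle⟩
      by_cases hMX : M ∈ X
      · right
        refine ⟨X.erase M, ⟨?_, ?_⟩, insert_erase hMX⟩
        · rw [card_erase_of_mem (max'_mem _ _), card_erase_of_mem hMX, hcard]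
        · rw [erase_eq, erase_eq]
          exact (toColex_sdiff_le_toColex_sdiff (singleton_subset_iff.2 hMX)
            (singleton_subset_iff.2 (max'_mem _ _))).2 hle
      · left
        refine ⟨fun x hx => ?_, hcard.symm⟩
        have hxM : x ≤ M := Colex.forall_le_mono hle (fun b hb => le_max' _ _ hb) _ hx
        exact mem_Iio.2 (lt_of_le_of_ne hxM (by rintro rfl; exact hMX hx))
    · rintro (⟨hsub, hcard⟩ | ⟨Y, hY', rfl⟩)
      · refine ⟨hcard.symm, ?_⟩
        have hMX : M ∉ X := fun h => lt_irrefl _ (mem_Iio.1 (hsub h))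
        refine le_of_lt (Colex.toColex_lt_toColex_iff_exists_forall_lt.2
          ⟨M, max'_mem _ _, hMX, fun b hb _ => mem_Iio.1 (hsub hb)⟩)
      · have hY : #(u.erase M) = #Y ∧ toColex Y ≤ toColex (u.erase M) := hY'
        have hMY : M ∉ Y := by
          intro hMY
          have := Colex.forall_lt_mono hY.2
            (fun b hb => lt_of_le_of_ne (le_max' _ _ (mem_of_mem_erase hb))
              (ne_of_mem_erase hb)) _ hMY
          exact lt_irrefl _ this
        constructor
        · rw [card_insert_of_notMem hMY, ← hY.1, card_erase_of_mem (max'_mem _ _)]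
          have : 1 ≤ #u := card_pos.2 hu
          omega
        · have h1 : insert M Y \ {M} = Y := by
            rw [← erase_eq, erase_insert hMY]
          have h2 : insert M (u.erase M) \ {M} = u.erase M := by
            rw [← erase_eq, erase_insert (notMem_erase _ _)]
          have h3 : insert M (u.erase M) = u := insert_erase (max'_mem _ _)
          have := (toColex_sdiff_le_toColex_sdiff
            (singleton_subset_iff.2 (mem_insert_self M Y))
            (singleton_subset_iff.2 (mem_insert_self M (u.erase M)))).1
          rw [h1, h2, h3] at this
          exact this hY.2
  have hdisj : Disjoint ((Finset.Iio M).powersetCard #u)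
      ((initSeg (u.erase M)).image (insert M)) := by
    rw [disjoint_left]
    intro X hX hX2
    rw [mem_image] at hX2
    obtain ⟨Y, hY, rfl⟩ := hX2
    rw [mem_powersetCard] at hX
    exact lt_irrefl M (mem_Iio.1 (hX.1 (mem_insert_self M Y)))
  rw [hsplit, card_union_of_disjoint hdisj, card_powersetCard, Fin.card_Iio]
  congr 1
  apply Finset.card_image_of_injOn
  intro X hX Y hY hXY
  have hMX : M ∉ X := by
    rw [mem_coe, mem_initSeg] at hX
    intro hMX
    exact lt_irrefl _ (Colex.forall_lt_mono hX.2
      (fun b hb => lt_of_le_of_ne (le_max' _ _ (mem_of_mem_erase hb)) (ne_of_mem_erase hb))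
      _ hMX)
  have hMY : M ∉ Y := by
    rw [mem_coe, mem_initSeg] at hY
    intro hMY
    exact lt_irrefl _ (Colex.forall_lt_mono hY.2
      (fun b hb => lt_of_le_of_ne (le_max' _ _ (mem_of_mem_erase hb)) (ne_of_mem_erase hb))
      _ hMY)
  rw [← erase_insert hMX, ← erase_insert hMY, hXY]

lemma shadow_topk (k : ℕ) (u : Finset (Fin n)) (hk : k ≤ #u) :
    ∂^[k] (initSeg u) = initSeg (topk k u) := by
  induction k generalizing u with
  | zero => rfl
  | succ k ih =>
      have hu : u.Nonempty := card_pos.1 (by omega)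
      rw [Function.iterate_succ_apply, Colex.shadow_initSeg hu]
      have : u.erase (u.min' hu) = emin u := by rw [emin, dif_pos hu]
      rw [this, ih _ (by rw [card_emin _ hu]; omega), ← topk_succ]

/-- The master inequality: for `c ≤ l = #u` with `u ⊆ [0, N)` and `l + c ≤ N`,
`#initSeg u + C(N,c) ≤ #initSeg (topk (l-c) u) + C(N,l)`. -/
lemma Q : ∀ l : ℕ, ∀ u : Finset (Fin n), ∀ c N : ℕ, #u = l → c ≤ l → l + c ≤ N →
    (∀ x ∈ u, (x : ℕ) < N) →
    #(initSeg u) + N.choose c ≤ #(initSeg (topk (l - c) u)) + N.choose l := by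
  intro l
  induction l with
  | zero =>
      intro u c N hcard hcl hN hxN
      have : c = 0 := by omega
      subst this
      rw [Nat.sub_zero, topk_zero]
  | succ l ih =>
      intro u c N hcard hcl hN hxN
      rcases eq_or_lt_of_le hcl with rfl | hclt
      · rw [Nat.sub_self, topk_zero]
      have hu : u.Nonempty := card_pos.1 (by omega)
      rcases Nat.eq_zero_or_pos c with rfl | hc
      · -- c = 0
        have htop : topk (l + 1 - 0) u = ∅ := by
          rw [← Finset.card_eq_zero, card_topk _ _ (by omega)]
          omega
        rw [Nat.sub_zero] at htop ⊢
        rw [htop, initSeg_empty_eq, card_singleton, Nat.choose_zero_right]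
        have := card_initSeg_le u N hxN
        rw [hcard] at this
        omega
      -- 1 ≤ c < l + 1
      obtain ⟨c, rfl⟩ : ∃ c', c = c' + 1 := ⟨c - 1, by omega⟩
      set M := u.max' hu with hMdef
      set u' := u.erase M with hu'def
      have hcardu' : #u' = l := by
        rw [hu'def, card_erase_of_mem (max'_mem _ _), hcard]
        omega
      have hk : l + 1 - (c + 1) = l - c := by omega
      have hkl : l - c ≤ l := by omega
      -- peel u
      have hP1 : #(initSeg u) = ((M : Fin n) : ℕ).choose (l + 1) + #(initSeg u') := by
        rw [card_initSeg_peel u hu, hcard]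
      -- peel topk (l-c) u
      have hvne : (topk (l - c) u).Nonempty := by
        rw [← Finset.card_pos, card_topk _ _ (by omega), hcard]; omega
      have hmaxv : (topk (l - c) u).max' hvne = M := max'_topk _ _ hu (by omega) _
      have hverase : (topk (l - c) u).erase M = topk (l - c) u' := by
        rw [hu'def, topk_erase_max _ _ hu (by omega)]
      have hP2 : #(initSeg (topk (l - c) u)) =
          ((M : Fin n) : ℕ).choose (c + 1) + #(initSeg (topk (l - c) u')) := by
        rw [card_initSeg_peel _ hvne, hmaxv, card_topk _ _ (by omega), hcard, hverase]
        congr 2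
        omega
      -- IH on u'
      set N' := max ((M : Fin n) : ℕ) (l + c) with hN'def
      have hMN : ((M : Fin n) : ℕ) < N := hxN _ (max'_mem _ _)
      have hIH := ih u' c N' hcardu' (by omega) (by omega) ?_
      swap
      · intro x hx
        have hxM : x ≤ M := le_max' _ _ (mem_of_mem_erase (hu'def ▸ hx))
        have hxne : x ≠ M := ne_of_mem_erase (hu'def ▸ hx)
        have : (x : ℕ) < ((M : Fin n) : ℕ) := lt_of_le_of_ne hxM (by simpa [Fin.ext_iff] using hxne)
        omega
      -- arithmetic
      have harith : ((M : Fin n) : ℕ).choose (l + 1) + N.choose (c + 1) + N'.choose l ≤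
          ((M : Fin n) : ℕ).choose (c + 1) + N.choose (l + 1) + N'.choose c := by
        rcases le_or_gt (l + c) ((M : Fin n) : ℕ) with hcase | hcase
        · -- N' = M
          have hN' : N' = ((M : Fin n) : ℕ) := by rw [hN'def]; omega
          rw [hN']
          have e1 : ((M : Fin n) : ℕ).choose (l + 1) + ((M : Fin n) : ℕ).choose l =
              (((M : Fin n) : ℕ) + 1).choose (l + 1) := by
            rw [Nat.choose_succ_succ' ]; omega
          have e2 : ((M : Fin n) : ℕ).choose (c + 1) + ((M : Fin n) : ℕ).choose c =
              (((M : Fin n) : ℕ) + 1).choose (c + 1) := by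
            rw [Nat.choose_succ_succ' ]; omega
          have := N2inc (c := c + 1) (l := l + 1) (x := ((M : Fin n) : ℕ) + 1) (y := N)
            (by omega) (by omega) (by omega)
          omega
        · -- N' = l + c
          have hN' : N' = l + c := by rw [hN'def]; omega
          rw [hN']
          have e1 : (l + c).choose l = (l + c).choose c := by
            rw [← Nat.choose_symm (show c ≤ l + c by omega)]
            congr 1
            omega
          have h1 : ((M : Fin n) : ℕ).choose (l + 1) ≤ ((M : Fin n) : ℕ).choose (c + 1) :=
            C1 (by omega) (by omega)
          have h2 : N.choose (c + 1) ≤ N.choose (l + 1) := C2 (by omega) (by omega)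
          omega
      rw [hP1, hk, hP2]
      omega

/-- There is an initial segment of any cardinality `1 ≤ N ≤ C(n,r)`. -/
lemma exists_initSeg_of_card (r N : ℕ) (hN1 : 1 ≤ N) (hN2 : N ≤ n.choose r) :
    ∃ s : Finset (Fin n), #s = r ∧ #(initSeg s) = N := by
  set T : Finset (Colex (Finset (Fin n))) := ((univ : Finset (Fin n)).powersetCard r).image toColex
    with hTdef
  have hinj : Function.Injective (toColex : Finset (Fin n) → Colex (Finset (Fin n))) :=
    fun _ _ h => toColex_inj.1 h
  have hcardT : #T = n.choose r := by
    rw [hTdef, Finset.card_image_of_injective _ hinj,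
      card_powersetCard, Finset.card_univ, Fintype.card_fin]
  set g := T.orderEmbOfFin hcardT with hgdef
  set i : Fin (n.choose r) := ⟨N - 1, by omega⟩ with hidef
  set x := g i with hxdef
  have hxT : x ∈ T := Finset.orderEmbOfFin_mem _ _ _
  have hmemT : ∀ y : Colex (Finset (Fin n)), y ∈ T ↔ ∃ k, g k = y := by
    intro y
    rw [← Finset.mem_coe, ← Finset.range_orderEmbOfFin T hcardT, Set.mem_range]
  obtain ⟨s, hs, hsx⟩ : ∃ s ∈ (univ : Finset (Fin n)).powersetCard r, toColex s = x := by
    rw [hTdef, mem_image] at hxT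
    exact hxT
  rw [Finset.mem_powersetCard_univ] at hs
  refine ⟨s, hs, ?_⟩
  have hset : initSeg s = (T.filter (fun y => y ≤ x)).image ofColex := by
    ext t
    simp only [mem_initSeg, mem_image, mem_filter]
    constructor
    · rintro ⟨hc, hle⟩
      refine ⟨toColex t, ⟨?_, hsx ▸ hle⟩, rfl⟩
      rw [hTdef, mem_image]
      exact ⟨t, Finset.mem_powersetCard_univ.2 (by omega), rfl⟩
    · rintro ⟨y, ⟨hyT, hle⟩, rfl⟩
      rw [hTdef, mem_image] at hyT
      obtain ⟨t', ht', rfl⟩ := hyT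
      rw [Finset.mem_powersetCard_univ] at ht'
      exact ⟨by simp [ht', hs], by rw [← hsx] at hle; exact hle⟩
  have hofinj : Function.Injective (ofColex : Colex (Finset (Fin n)) → Finset (Fin n)) :=
    fun a b h => ofColex_inj.1 h
  rw [hset, Finset.card_image_of_injective _ hofinj]
  have hfil : T.filter (fun y => y ≤ x) = (Finset.Iic i).image (fun k => g k) := by
    ext y
    simp only [mem_filter, mem_image, mem_Iic]
    constructor
    · rintro ⟨hyT, hle⟩
      obtain ⟨k, rfl⟩ := (hmemT y).1 hyT
      exact ⟨k, g.le_iff_le.1 (hxdef ▸ hle), rfl⟩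
    · rintro ⟨k, hk, rfl⟩
      exact ⟨(hmemT _).2 ⟨k, rfl⟩, hxdef ▸ g.le_iff_le.2 hk⟩
  rw [hfil, Finset.card_image_of_injective _ g.injective, Fin.card_Iic]
  simp only [hidef]
  omega

/-- The key lemma: a lower bound for the iterated shadow. -/
lemma shadow_lower_bound (𝒟 : Finset (Finset (Fin n))) (r b m : ℕ)
    (h𝒟 : (𝒟 : Set (Finset (Fin n))).Sized r)
    (hb : 1 ≤ b) (hbr : b ≤ r) (hrm : r ≤ m) (hmn : m ≤ n) (hrb : n + 1 ≤ r + b)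
    (hcard : m.choose r ≤ #𝒟) :
    𝒟.card + m.choose b ≤ m.choose r + #(∂^[r - b] 𝒟) := by
  rcases eq_or_lt_of_le hbr with rfl | hbr'
  · simp only [Nat.sub_self, Function.iterate_zero, id]
    omega
  -- b < r
  have h𝒟sub : 𝒟 ⊆ (univ : Finset (Fin n)).powersetCard r := fun X hX =>
    Finset.mem_powersetCard_univ.2 (h𝒟 hX)
  have h𝒟le : #𝒟 ≤ n.choose r := by
    calc #𝒟 ≤ #((univ : Finset (Fin n)).powersetCard r) := card_le_card h𝒟sub
      _ = n.choose r := by rw [card_powersetCard, Finset.card_univ, Fintype.card_fin]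
  have hpos : 1 ≤ #𝒟 := le_trans (Nat.choose_pos hrm) hcard
  obtain ⟨s, hsr, hscard⟩ := exists_initSeg_of_card r #𝒟 hpos h𝒟le
  set k := r - b with hkdef
  have hkk : #(∂^[k] (initSeg s)) ≤ #(∂^[k] 𝒟) := by
    apply Finset.iterated_kk h𝒟 (le_of_eq hscard)
    have := Colex.isInitSeg_initSeg (s := s)
    rwa [hsr] at this
  have hshad : ∂^[k] (initSeg s) = initSeg (topk k s) := shadow_topk k s (by omega)
  have hs : s.Nonempty := card_pos.1 (by omega)
  set M := s.max' hs with hMdef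
  rcases le_or_gt m ((M : Fin n) : ℕ) with hcase | hcase
  · -- m ≤ M : use the peeling + Q
    set s' := s.erase M with hs'def
    have hcards' : #s' = r - 1 := by rw [hs'def, card_erase_of_mem (max'_mem _ _), hsr]
    have hP1 : #(initSeg s) = ((M : Fin n) : ℕ).choose r + #(initSeg s') := by
      rw [card_initSeg_peel s hs, hsr]
    have hvne : (topk k s).Nonempty := by
      rw [← Finset.card_pos, card_topk _ _ (by omega), hsr]; omega
    have hmaxv : (topk k s).max' hvne = M := max'_topk _ _ hs (by omega) _
    have hverase : (topk k s).erase M = topk k s' := by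
      rw [hs'def, topk_erase_max _ _ hs (by omega)]
    have hP2 : #(initSeg (topk k s)) =
        ((M : Fin n) : ℕ).choose b + #(initSeg (topk k s')) := by
      rw [card_initSeg_peel _ hvne, hmaxv, card_topk _ _ (by omega), hsr, hverase]
      congr 2
      omega
    -- apply Q to s'
    have hMn : ((M : Fin n) : ℕ) < n := (M : Fin n).isLt
    have hQ := Q (r - 1) s' (b - 1) (r + b - 2) hcards' (by omega) (by omega) ?_
    swap
    · intro x hx
      have hxM : x ≤ M := le_max' _ _ (mem_of_mem_erase (hs'def ▸ hx))
      have hxne : x ≠ M := ne_of_mem_erase (hs'def ▸ hx)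
      have : (x : ℕ) < ((M : Fin n) : ℕ) := lt_of_le_of_ne hxM (by simpa [Fin.ext_iff] using hxne)
      omega
    have hsym : (r + b - 2).choose (b - 1) = (r + b - 2).choose (r - 1) := by
      rw [← Nat.choose_symm (show r - 1 ≤ r + b - 2 by omega)]
      congr 1
      omega
    have hkeq : r - 1 - (b - 1) = k := by omega
    rw [hkeq, hsym] at hQ
    -- hQ : #initSeg s' + X ≤ #initSeg (topk k s') + X
    have hQ' : #(initSeg s') ≤ #(initSeg (topk k s')) := by omega
    have hdec := N2dec (b := b) (r := r) (x := m) (y := ((M : Fin n) : ℕ))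
      hbr (by omega) hcase
    rw [hshad] at hkk
    calc #𝒟 + m.choose b
        = ((M : Fin n) : ℕ).choose r + #(initSeg s') + m.choose b := by
          rw [← hP1, hscard]
      _ ≤ m.choose r + ((M : Fin n) : ℕ).choose b + #(initSeg (topk k s')) := by omega
      _ = m.choose r + #(initSeg (topk k s)) := by rw [hP2]; omega
      _ ≤ m.choose r + #(∂^[k] 𝒟) := by omega
  · -- M < m : crude bound + Lovász form of Kruskal-Katona
    have hbound : #(initSeg s) ≤ m.choose r := by
      have := card_initSeg_le s m ?_
      · rwa [hsr] at this
      · intro x hx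
        have : x ≤ M := le_max' _ _ hx
        have : (x : ℕ) ≤ ((M : Fin n) : ℕ) := this
        omega
    have hlov : m.choose (r - k) ≤ #(∂^[k] 𝒟) :=
      Finset.kruskal_katona_lovasz_form (by omega) hrm hmn h𝒟 hcard
    have : r - k = b := by omega
    rw [this] at hlov
    omega

/-- Fin-level main theorem. -/
lemma main_fin (a b j : ℕ) (𝒜 ℬ : Finset (Finset (Fin n)))
    (h𝒜 : (𝒜 : Set (Finset (Fin n))).Sized a) (hℬ : (ℬ : Set (Finset (Fin n))).Sized b)
    (hcross : ∀ A ∈ 𝒜, ∀ B ∈ ℬ, (A ∩ B).Nonempty)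
    (hj1 : 1 ≤ j) (hja : j ≤ a) (hab : a < b) (hn : a + b ≤ n)
    (hflow : (n - j).choose (a - j) ≤ #𝒜) :
    𝒜.card + #ℬ ≤ n.choose b + (n - j).choose (a - j) - (n - j).choose b := by
  set r := n - a with hrdef
  set m := n - j with hmdef
  set t := r - b with htdef
  -- the complement family
  have h𝒜c : (𝒜ᶜˢ : Set (Finset (Fin n))).Sized r := by
    have := h𝒜.compls
    rwa [Fintype.card_fin] at this
  have hsym : m.choose r = (n - j).choose (a - j) := by
    rw [hmdef, hrdef]
    rw [← Nat.choose_symm (show a - j ≤ n - j by omega)]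
    congr 1
    omega
  have hcard𝒜c : m.choose r ≤ #(𝒜ᶜˢ) := by
    rw [Finset.card_compls, hsym]
    exact hflow
  have hL := shadow_lower_bound (𝒜ᶜˢ) r b m h𝒜c (by omega) (by omega) (by omega)
    (by omega) (by omega) hcard𝒜c
  -- disjointness of ℬ and the iterated shadow
  have hdisj : Disjoint ℬ (∂^[t] (𝒜ᶜˢ)) := by
    rw [disjoint_left]
    intro B hB hB'
    rw [Finset.mem_shadow_iterate_iff_exists_sdiff] at hB'
    obtain ⟨C, hC, hBC, -⟩ := hB'
    rw [Finset.mem_compls] at hC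
    have hdisjAB : Disjoint Cᶜ B :=
      disjoint_of_subset_right hBC disjoint_compl_left
    obtain ⟨x, hx⟩ := hcross Cᶜ hC B hB
    rw [mem_inter] at hx
    exact (disjoint_left.1 hdisjAB) hx.1 hx.2
  -- size bound at level b
  have hsizedsh : ((∂^[t] (𝒜ᶜˢ)) : Set (Finset (Fin n))).Sized b := by
    have := h𝒜c.shadow_iterate (k := t)
    have hrb : r - t = b := by omega
    rwa [hrb] at this
  have hunion : #ℬ + #(∂^[t] (𝒜ᶜˢ)) ≤ n.choose b := by
    rw [← card_union_of_disjoint hdisj]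
    calc #(ℬ ∪ ∂^[t] (𝒜ᶜˢ)) ≤ #((univ : Finset (Fin n)).powersetCard b) := by
          apply card_le_card
          intro X hX
          rw [Finset.mem_powersetCard_univ]
          rcases mem_union.1 hX with h | h
          · exact hℬ h
          · exact hsizedsh h
      _ = n.choose b := by rw [card_powersetCard, Finset.card_univ, Fintype.card_fin]
  have hcc : #(𝒜ᶜˢ) = #𝒜 := Finset.card_compls _
  have hmb : m.choose b ≤ n.choose b := Nat.choose_le_choose _ (by omega)
  rw [← htdef] at hL
  have hfin : #𝒜 + #ℬ + m.choose b ≤ n.choose b + m.choose r := by omega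
  have h1 : (n - j).choose (a - j) = m.choose r := hsym.symm
  have h2 : (n - j).choose b = m.choose b := by rw [hmdef]
  rw [h1, h2]
  omega

/-- ℕ-level version with `1 ≤ j ≤ a`. -/
lemma main_nat (n a b j : ℕ) (hj1 : 1 ≤ j) (hja : j ≤ a) (hab : a < b) (hn : a + b ≤ n)
    (F G : Finset (Finset ℕ))
    (hF : F ⊆ (Finset.Icc 1 n).powersetCard a)
    (hG : G ⊆ (Finset.Icc 1 n).powersetCard b)
    (hcross : ∀ A ∈ F, ∀ B ∈ G, (A ∩ B).Nonempty)
    (hFlow : (n - j).choose (a - j) ≤ F.card) :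
    F.card + G.card ≤ n.choose b + (n - j).choose (a - j) - (n - j).choose b := by
  have np : 0 < n := by omega
  set f : ℕ → Fin n := fun x => if h : x - 1 < n then (⟨x - 1, h⟩ : Fin n) else ⟨0, np⟩
    with hfdef
  have hgf : ∀ x ∈ Finset.Icc 1 n, ((f x : Fin n) : ℕ) + 1 = x := by
    intro x hx
    rw [Finset.mem_Icc] at hx
    rw [hfdef]
    simp only
    rw [dif_pos (by omega : x - 1 < n)]
    simp only
    omega
  have hinjOn : ∀ A : Finset ℕ, A ⊆ Finset.Icc 1 n → Set.InjOn f A := by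
    intro A hA x hx y hy hxy
    have h1 := hgf x (hA hx)
    have h2 := hgf y (hA hy)
    rw [hxy] at h1
    omega
  have hcardIm : ∀ A : Finset ℕ, A ⊆ Finset.Icc 1 n → #(A.image f) = #A := fun A hA =>
    Finset.card_image_of_injOn (hinjOn A hA)
  have hImInj : ∀ A B : Finset ℕ, A ⊆ Finset.Icc 1 n → B ⊆ Finset.Icc 1 n →
      A.image f = B.image f → A = B := by
    intro A B hA hB hAB
    have : (A.image f).image (fun i : Fin n => (i : ℕ) + 1) =
        (B.image f).image (fun i : Fin n => (i : ℕ) + 1) := by rw [hAB]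
    rw [Finset.image_image, Finset.image_image] at this
    have ekey : ∀ C : Finset ℕ, C ⊆ Finset.Icc 1 n →
        C.image ((fun i : Fin n => (i : ℕ) + 1) ∘ f) = C := by
      intro C hC
      ext y
      simp only [Finset.mem_image, Function.comp_apply]
      constructor
      · rintro ⟨x, hx, rfl⟩
        rw [hgf x (hC hx)]
        exact hx
      · intro hy
        exact ⟨y, hy, hgf y (hC hy)⟩
    have eA := ekey A hA
    have eB := ekey B hB
    rwa [eA, eB] at this
  have hFmem : ∀ A ∈ F, A ⊆ Finset.Icc 1 n ∧ #A = a := by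
    intro A hA
    have := hF hA
    rwa [Finset.mem_powersetCard] at this
  have hGmem : ∀ B ∈ G, B ⊆ Finset.Icc 1 n ∧ #B = b := by
    intro B hB
    have := hG hB
    rwa [Finset.mem_powersetCard] at this
  set 𝒜 : Finset (Finset (Fin n)) := F.image (fun A => A.image f) with h𝒜def
  set ℬ : Finset (Finset (Fin n)) := G.image (fun B => B.image f) with hℬdef
  have hcard𝒜 : #𝒜 = #F := by
    rw [h𝒜def]
    apply Finset.card_image_of_injOn
    intro A hA B hB hAB
    exact hImInj A B (hFmem A hA).1 (hFmem B hB).1 hAB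
  have hcardℬ : #ℬ = #G := by
    rw [hℬdef]
    apply Finset.card_image_of_injOn
    intro A hA B hB hAB
    exact hImInj A B (hGmem A hA).1 (hGmem B hB).1 hAB
  have hsized𝒜 : (𝒜 : Set (Finset (Fin n))).Sized a := by
    intro X hX
    rw [Finset.mem_coe, h𝒜def, Finset.mem_image] at hX
    obtain ⟨A, hA, rfl⟩ := hX
    rw [hcardIm A (hFmem A hA).1]
    exact (hFmem A hA).2
  have hsizedℬ : (ℬ : Set (Finset (Fin n))).Sized b := by
    intro X hX
    rw [Finset.mem_coe, hℬdef, Finset.mem_image] at hX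
    obtain ⟨B, hB, rfl⟩ := hX
    rw [hcardIm B (hGmem B hB).1]
    exact (hGmem B hB).2
  have hcross' : ∀ A' ∈ 𝒜, ∀ B' ∈ ℬ, (A' ∩ B').Nonempty := by
    intro A' hA' B' hB'
    rw [h𝒜def, Finset.mem_image] at hA'
    rw [hℬdef, Finset.mem_image] at hB'
    obtain ⟨A, hA, rfl⟩ := hA'
    obtain ⟨B, hB, rfl⟩ := hB'
    obtain ⟨x, hx⟩ := hcross A hA B hB
    rw [Finset.mem_inter] at hx
    exact ⟨f x, Finset.mem_inter.2 ⟨Finset.mem_image_of_mem f hx.1,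
      Finset.mem_image_of_mem f hx.2⟩⟩
  have := main_fin a b j 𝒜 ℬ hsized𝒜 hsizedℬ hcross' hj1 hja hab hn
    (by rw [hcard𝒜]; exact hFlow)
  rwa [hcard𝒜, hcardℬ] at this

end Colex

end FTAux

/-- Theorem 2, Point 1: let `n ≥ a + b`, `j ≥ 1`, `a < b`, and let `F ⊆ C([n],a)`,
`G ⊆ C([n],b)` be cross-intersecting with `|F| ≥ C(n-j, a-j)`. Then
`|F| + |G| ≤ C(n,b) + C(n-j, a-j) - C(n-j, b)`. -/
theorem sum_bound_point1 (n a b j : ℕ) (hj : 1 ≤ j) (hab : a < b) (hn : a + b ≤ n)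
    (F G : Finset (Finset ℕ))
    (hF : F ⊆ (Finset.Icc 1 n).powersetCard a)
    (hG : G ⊆ (Finset.Icc 1 n).powersetCard b)
    (hcross : ∀ A ∈ F, ∀ B ∈ G, (A ∩ B).Nonempty)
    (hFlow : (n - j).choose (a - j) ≤ F.card) :
    F.card + G.card ≤ n.choose b + (n - j).choose (a - j) - (n - j).choose b := by
  have hmono : (n - j).choose b ≤ n.choose b := Nat.choose_le_choose _ (by omega)
  rcases Nat.eq_zero_or_pos a with rfl | ha
  · -- a = 0 : F ⊆ {∅}, so G = ∅
    have hzj : (0 : ℕ) - j = 0 := by omega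
    rw [hzj, Nat.choose_zero_right] at hFlow ⊢
    have hFsub : F ⊆ {∅} := by
      intro A hA
      have := hF hA
      rw [Finset.mem_powersetCard] at this
      rw [Finset.mem_singleton, ← Finset.card_eq_zero]
      exact this.2
    have hFcard : F.card ≤ 1 := le_trans (Finset.card_le_card hFsub) (by simp)
    have hemem : ∅ ∈ F := by
      have : F.Nonempty := Finset.card_pos.1 (by omega)
      obtain ⟨A, hA⟩ := this
      have := hFsub hA
      rw [Finset.mem_singleton] at this
      rwa [this] at hA
    have hGempty : G = ∅ := by
      rw [Finset.eq_empty_iff_forall_notMem]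
      intro B hB
      obtain ⟨x, hx⟩ := hcross ∅ hemem B hB
      simp at hx
    rw [hGempty]
    simp only [Finset.card_empty]
    have hb1 : 1 ≤ b := by omega
    have : 1 ≤ n.choose b := Nat.choose_pos (by omega)
    omega
  · -- a ≥ 1
    rcases le_or_gt j a with hja | hja
    · exact FTAux.main_nat n a b j hj hja hab hn F G hF hG hcross hFlow
    · -- j > a : use j' = a
      have hFlow' : (n - a).choose (a - a) ≤ F.card := by
        have h1 : a - j = 0 := by omega
        rw [h1, Nat.choose_zero_right] at hFlow
        rw [Nat.sub_self, Nat.choose_zero_right]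
        exact hFlow
      have hmain := FTAux.main_nat n a b a (by omega) le_rfl hab hn F G hF hG hcross hFlow'
      have h1 : a - j = 0 := by omega
      rw [Nat.sub_self, Nat.choose_zero_right] at hmain
      rw [h1, Nat.choose_zero_right]
      have h2 : (n - j).choose b ≤ (n - a).choose b := Nat.choose_le_choose _ (by omega)
      have h3 : (n - a).choose b ≤ n.choose b := Nat.choose_le_choose _ (by omega)
      omega
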